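/- Let p, C be real numbers with p > 0 and C > 0, let ω₀ > 0 satisfy ω₀⁴ + p²ω₀² = C², and for a natural number n set τₙ = (arccos(ω₀²/C) + 2nπ)/ω₀. Then λ = iω₀ satisfies λ² + pλ + C e^{−λτₙ} = 0, i.e., the characteristic equation has a purely imaginary root at every delay value τₙ. -/

import Mathlib

/-- At every critical delay τₙ = (arccos(ω₀²/C) + 2nπ)/ω₀ the characteristic
equation λ² + pλ + C e^{−λτ} = 0 has the purely imaginary root λ = iω₀. -/
theorem stmt_10 (p C ω₀ : ℝ) (n : ℕ) (hp : 0 < p) (hC : 0 < C) (hω : 0 < ω₀)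
    (hroot : ω₀ ^ 4 + p ^ 2 * ω₀ ^ 2 = C ^ 2)
    (τn : ℝ) (hτn : τn = (Real.arccos (ω₀ ^ 2 / C) + 2 * n * Real.pi) / ω₀) :
    (Complex.I * (ω₀ : ℂ)) ^ 2 + (p : ℂ) * (Complex.I * (ω₀ : ℂ)) +
      (C : ℂ) * Complex.exp (-(Complex.I * (ω₀ : ℂ)) * (τn : ℂ)) = 0 := by
  have hωC : ω₀ ^ 2 ≤ C := by nlinarith [sq_nonneg ω₀, sq_nonneg p, mul_pos (mul_pos hp hp) (mul_pos hω hω)]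
  have hx1 : ω₀ ^ 2 / C ≤ 1 := by
    rw [div_le_one hC]; exact hωC
  have hx0 : (-1 : ℝ) ≤ ω₀ ^ 2 / C := by
    have : (0:ℝ) ≤ ω₀ ^ 2 / C := by positivity
    linarith
  have hτ : ω₀ * τn = Real.arccos (ω₀ ^ 2 / C) + 2 * n * Real.pi := by
    rw [hτn]; field_simp
  have hcos : Real.cos (ω₀ * τn) = ω₀ ^ 2 / C := by
    have : ω₀ * τn = Real.arccos (ω₀ ^ 2 / C) + (n : ℤ) * (2 * Real.pi) := by
      rw [hτ]; push_cast; ring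
    rw [this, Real.cos_add_int_mul_two_pi, Real.cos_arccos hx0 hx1]
  have hsin : Real.sin (ω₀ * τn) = p * ω₀ / C := by
    have h1 : ω₀ * τn = Real.arccos (ω₀ ^ 2 / C) + (n : ℤ) * (2 * Real.pi) := by
      rw [hτ]; push_cast; ring
    rw [h1, Real.sin_add_int_mul_two_pi, Real.sin_arccos]
    have h2 : 1 - (ω₀ ^ 2 / C) ^ 2 = (p * ω₀ / C) ^ 2 := by
      field_simp; nlinarith
    rw [h2, Real.sqrt_sq (by positivity)]
  have hexp : Complex.exp (-(Complex.I * (ω₀ : ℂ)) * (τn : ℂ))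
      = ((Real.cos (ω₀ * τn) : ℂ)) - ((Real.sin (ω₀ * τn) : ℂ)) * Complex.I := by
    have h3 : -(Complex.I * (ω₀ : ℂ)) * (τn : ℂ) = ((-(ω₀ * τn) : ℝ) : ℂ) * Complex.I := by
      push_cast; ring
    rw [h3, Complex.exp_mul_I, ← Complex.ofReal_cos, ← Complex.ofReal_sin,
      Real.cos_neg, Real.sin_neg]
    push_cast; ring
  rw [hexp, hcos, hsin]
  have hCne : (C : ℂ) ≠ 0 := by exact_mod_cast hC.ne'
  field_simp
  ring_nf
  simp [Complex.I_sq]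
  have hC1 : (C:ℂ) * (C:ℂ)⁻¹ = 1 := mul_inv_cancel₀ hCne
  linear_combination ((ω₀:ℂ)^2 - Complex.I * ω₀ * p) * hC1
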